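/- For every integer r ≥ 1, the following identity holds in ℚ(q), with E = q^8−q^6−q^5+q^3 and P = (q−1)^r − 3^r: P·E/((q^2−1)(q^2−q)) + P(q^r−1)q^(2r)·E/((q−1)^2 q^3) + P(q^r−q)·E/((q−1)^2 q^2) + P(q^r−q)(q^r−q^2)·E/((q^2−1)(q^2−q)q^2) + P(q^r−1)(q^r−q)q^r·E/((q−1)^2 q^3) + P(q^r−1)(q^r−q)·E/((q−1)^2 q^2) + P(q^r−q)·E/((q−1)^2 q^2) + P(q^r−q)(q^r−q^2)·E/((q^2−q)(q^2−1)q^2) + P(q^r−q)^2 q^r·E/((q−1)^2 q^3) = P·(q^2+q+1)·(3q^(3r+1) + 3q^(3r) − 2q^(2r+2) − 4q^(2r+1) + q^3). (This is the computation of the E-polynomial e(R_2) of the stratum of reducible representations of F_r in SL(3,ℂ) whose matrices have eigenvalue pattern (λ_i, λ_i, μ_i) with (λ_i) not all cube roots of unity.) -/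
import Mathlib


/-- The variable `q`, viewed as a rational function in `ℚ(q)`. -/
noncomputable def q : RatFunc ℚ := RatFunc.X

/-- `E = e(PGL(3,ℂ))`. -/
noncomputable def E : RatFunc ℚ := q^8 - q^6 - q^5 + q^3

/-- `P`, the E-polynomial of the parameter space of eigenvalues for the
stratum `R_2`. -/
noncomputable def P (r : ℕ) : RatFunc ℚ := (q - 1)^r - 3^r

lemma algMap_ne {p : Polynomial ℚ} (h : p ≠ 0) :
    algebraMap (Polynomial ℚ) (RatFunc ℚ) p ≠ 0 := by
  simpa using (RatFunc.algebraMap_injective ℚ).ne_iff.mpr h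

lemma hq0 : q ≠ 0 := RatFunc.X_ne_zero

lemma hq1 : q - 1 ≠ 0 := by
  have h := algMap_ne (p := Polynomial.X - 1) (by
    intro h
    have h2 := congrArg (Polynomial.eval 2) h
    norm_num at h2)
  have e : q - 1 = algebraMap (Polynomial ℚ) (RatFunc ℚ) (Polynomial.X - 1) := by
    rw [map_sub, map_one, RatFunc.algebraMap_X, q]
  rw [e]; exact h

lemma hq1' : q + 1 ≠ 0 := by
  have h := algMap_ne (p := Polynomial.X + 1) (by
    intro h
    have h2 := congrArg (Polynomial.eval 2) h
    norm_num at h2)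
  have e : q + 1 = algebraMap (Polynomial ℚ) (RatFunc ℚ) (Polynomial.X + 1) := by
    rw [map_add, map_one, RatFunc.algebraMap_X, q]
  rw [e]; exact h

/-- Computation of `e(R_2)`, the E-polynomial of the stratum of reducible
representations of `F_r` in `SL(3,ℂ)` whose matrices have eigenvalue pattern
`(λ_i, λ_i, μ_i)`, as a sum of the substrata `R_{21}, ..., R_{29}`. -/
theorem e_R2_stratum (r : ℕ) (hr : 1 ≤ r) :
    P r * E / ((q^2 - 1) * (q^2 - q))
      + P r * (q^r - 1) * q^(2*r) * E / ((q - 1)^2 * q^3)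
      + P r * (q^r - q) * E / ((q - 1)^2 * q^2)
      + P r * (q^r - q) * (q^r - q^2) * E / ((q^2 - 1) * (q^2 - q) * q^2)
      + P r * (q^r - 1) * (q^r - q) * q^r * E / ((q - 1)^2 * q^3)
      + P r * (q^r - 1) * (q^r - q) * E / ((q - 1)^2 * q^2)
      + P r * (q^r - q) * E / ((q - 1)^2 * q^2)
      + P r * (q^r - q) * (q^r - q^2) * E / ((q^2 - q) * (q^2 - 1) * q^2)
      + P r * (q^r - q)^2 * q^r * E / ((q - 1)^2 * q^3)
    = P r * (q^2 + q + 1)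
        * (3 * q^(3*r+1) + 3 * q^(3*r) - 2 * q^(2*r+2) - 4 * q^(2*r+1) + q^3) := by
  have h2 : q^2 - 1 ≠ 0 := by
    have h : q^2 - 1 = (q - 1) * (q + 1) := by ring
    rw [h]; exact mul_ne_zero hq1 hq1'
  have h3 : q^2 - q ≠ 0 := by
    have h : q^2 - q = q * (q - 1) := by ring
    rw [h]; exact mul_ne_zero hq0 hq1
  have hD1 : (q^2 - 1) * (q^2 - q) ≠ 0 := mul_ne_zero h2 h3
  have hD2 : (q - 1)^2 * q^3 ≠ 0 := mul_ne_zero (pow_ne_zero _ hq1) (pow_ne_zero _ hq0)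
  have hD3 : (q - 1)^2 * q^2 ≠ 0 := mul_ne_zero (pow_ne_zero _ hq1) (pow_ne_zero _ hq0)
  have hD4 : (q^2 - 1) * (q^2 - q) * q^2 ≠ 0 := mul_ne_zero hD1 (pow_ne_zero _ hq0)
  have hD8 : (q^2 - q) * (q^2 - 1) * q^2 ≠ 0 :=
    mul_ne_zero (mul_ne_zero h3 h2) (pow_ne_zero _ hq0)
  have t1 : P r * E / ((q^2 - 1) * (q^2 - q)) = P r * (q^2 * (q^2 + q + 1)) := by
    rw [div_eq_iff hD1, E]; ring
  have t2 : P r * (q^r - 1) * q^(2*r) * E / ((q - 1)^2 * q^3)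
      = P r * (q^r - 1) * q^(2*r) * ((q + 1) * (q^2 + q + 1)) := by
    rw [div_eq_iff hD2, E]; ring
  have t3 : P r * (q^r - q) * E / ((q - 1)^2 * q^2)
      = P r * (q^r - q) * (q * (q + 1) * (q^2 + q + 1)) := by
    rw [div_eq_iff hD3, E]; ring
  have t4 : P r * (q^r - q) * (q^r - q^2) * E / ((q^2 - 1) * (q^2 - q) * q^2)
      = P r * (q^r - q) * (q^r - q^2) * (q^2 + q + 1) := by
    rw [div_eq_iff hD4, E]; ring
  have t5 : P r * (q^r - 1) * (q^r - q) * q^r * E / ((q - 1)^2 * q^3)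
      = P r * (q^r - 1) * (q^r - q) * q^r * ((q + 1) * (q^2 + q + 1)) := by
    rw [div_eq_iff hD2, E]; ring
  have t6 : P r * (q^r - 1) * (q^r - q) * E / ((q - 1)^2 * q^2)
      = P r * (q^r - 1) * (q^r - q) * (q * (q + 1) * (q^2 + q + 1)) := by
    rw [div_eq_iff hD3, E]; ring
  have t8 : P r * (q^r - q) * (q^r - q^2) * E / ((q^2 - q) * (q^2 - 1) * q^2)
      = P r * (q^r - q) * (q^r - q^2) * (q^2 + q + 1) := by
    rw [div_eq_iff hD8, E]; ring
  have t9 : P r * (q^r - q)^2 * q^r * E / ((q - 1)^2 * q^3)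
      = P r * (q^r - q)^2 * q^r * ((q + 1) * (q^2 + q + 1)) := by
    rw [div_eq_iff hD2, E]; ring
  rw [t1, t2, t3, t4, t5, t6, t8, t9]
  ring
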